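/- Let S be a finite set of squares each of side at most 1/m, where m ≥ 2 is an integer. If the total area of S is at most 1/m² + (1 − 1/m)², then S can be packed in the unit square. -/

import Mathlib

lemma disj_fst {x1 x2 y1 y2 x1' x2' y1' y2' : ℝ} (h : x2 ≤ x1') :
    (Set.Ioo x1 x2 ×ˢ Set.Ioo y1 y2) ∩ (Set.Ioo x1' x2' ×ˢ Set.Ioo y1' y2') = ∅ := by
  apply Set.eq_empty_iff_forall_notMem.mpr
  rintro ⟨p, q⟩ ⟨⟨⟨h1, h2⟩, -⟩, ⟨⟨h3, h4⟩, -⟩⟩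
  linarith

lemma disj_snd {x1 x2 y1 y2 x1' x2' y1' y2' : ℝ} (h : y2 ≤ y1') :
    (Set.Ioo x1 x2 ×ˢ Set.Ioo y1 y2) ∩ (Set.Ioo x1' x2' ×ˢ Set.Ioo y1' y2') = ∅ := by
  apply Set.eq_empty_iff_forall_notMem.mpr
  rintro ⟨p, q⟩ ⟨⟨-, h1, h2⟩, ⟨-, h3, h4⟩⟩
  linarith

lemma disj_comm' {A B : Set (ℝ × ℝ)} (h : B ∩ A = ∅) : A ∩ B = ∅ := by
  rw [Set.inter_comm]; exact h

lemma pack_aux (a : ℝ) (ha0 : 0 < a) (ha1 : a ≤ 1/2) :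
    ∀ (L : List ℝ) (y h x : ℝ),
      L.Pairwise (· ≥ ·) → (∀ t ∈ L, 0 < t) → (∀ t ∈ L, t ≤ h) →
      0 ≤ y → 0 < h → h ≤ a → y + h ≤ 1 → h ≤ x →
      (∀ t ∈ L, (1 - a) * (y + h - a) + (x - h) * t + ((L.map (fun r => r^2)).sum) ≤ (1 - a)^2) →
      ∃ pos : Fin L.length → ℝ × ℝ,
        (∀ i, 0 ≤ (pos i).1 ∧ (pos i).1 + L.get i ≤ 1 ∧ 0 ≤ (pos i).2 ∧ (pos i).2 + L.get i ≤ 1) ∧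
        (∀ i, ((pos i).2 = y ∧ x ≤ (pos i).1) ∨ y + h ≤ (pos i).2) ∧
        (∀ i j, i ≠ j →
          (Set.Ioo (pos i).1 ((pos i).1 + L.get i) ×ˢ Set.Ioo (pos i).2 ((pos i).2 + L.get i)) ∩
          (Set.Ioo (pos j).1 ((pos j).1 + L.get j) ×ˢ Set.Ioo (pos j).2 ((pos j).2 + L.get j)) = ∅) := by
  intro L
  induction L with
  | nil =>
    intro y h x _ _ _ _ _ _ _ _ _
    exact ⟨Fin.elim0, fun i => i.elim0, fun i => i.elim0, fun i => i.elim0⟩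
  | cons s L' ih =>
    intro y h x hsort hpos hle hy hh0 hha hyh hhx hinv
    have hsortL' : L'.Pairwise (· ≥ ·) := (List.pairwise_cons.mp hsort).2
    have hmax : ∀ t ∈ L', t ≤ s := fun t ht => (List.pairwise_cons.mp hsort).1 t ht
    have hs0 : 0 < s := hpos s (List.mem_cons_self)
    have hsh : s ≤ h := hle s (List.mem_cons_self)
    have hsumnn : 0 ≤ (L'.map (fun r => r^2)).sum := by
      apply List.sum_nonneg
      intro t ht
      simp only [List.mem_map] at ht
      obtain ⟨r, -, rfl⟩ := ht
      positivity
    have hinv' : (1 - a) * (y + h - a) + (x - h) * s + (s^2 + (L'.map (fun r => r^2)).sum)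
        ≤ (1 - a)^2 := by
      have := hinv s (List.mem_cons_self)
      simp only [List.map_cons, List.sum_cons] at this
      linarith
    by_cases hx : x + s ≤ 1
    · -- place s at (x, y) in the current shelf
      have hinvL' : ∀ t ∈ L', (1 - a) * (y + h - a) + (x + s - h) * t +
          ((L'.map (fun r => r^2)).sum) ≤ (1 - a)^2 := by
        intro t ht
        have ht0 : 0 < t := hpos t (List.mem_cons_of_mem s ht)
        have hts : t ≤ s := hmax t ht
        nlinarith [hinv']
      obtain ⟨pos', hb', hc', hd'⟩ := ih y h (x + s) hsortL'
        (fun t ht => hpos t (List.mem_cons_of_mem s ht))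
        (fun t ht => hle t (List.mem_cons_of_mem s ht))
        hy hh0 hha hyh (by linarith) hinvL'
      have key : ∀ k : Fin L'.length,
          (Set.Ioo x (x + s) ×ˢ Set.Ioo y (y + s)) ∩
          (Set.Ioo (pos' k).1 ((pos' k).1 + L'.get k) ×ˢ
            Set.Ioo (pos' k).2 ((pos' k).2 + L'.get k)) = ∅ := by
        intro k
        rcases hc' k with ⟨h1, h2⟩ | h1
        · exact disj_fst h2
        · exact disj_snd (by linarith)
      refine ⟨Fin.cases (x, y) pos', ?_, ?_, ?_⟩
      · intro i
        induction i using Fin.cases with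
        | zero =>
          simp only [Fin.cases_zero, List.get_cons_zero]
          exact ⟨by linarith, hx, hy, by linarith⟩
        | succ j =>
          simp only [Fin.cases_succ, List.get_cons_succ']
          exact hb' j
      · intro i
        induction i using Fin.cases with
        | zero => exact Or.inl ⟨rfl, le_refl x⟩
        | succ j =>
          rcases hc' j with ⟨h1, h2⟩ | h1
          · refine Or.inl ⟨by simpa using h1, ?_⟩
            simp only [Fin.cases_succ]; linarith
          · exact Or.inr (by simpa using h1)
      · intro i j hij
        induction i using Fin.cases with
        | zero =>
          induction j using Fin.cases with
          | zero => exact absurd rfl hij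
          | succ k =>
            simpa only [Fin.cases_zero, Fin.cases_succ, List.get_cons_zero,
              List.get_cons_succ'] using key k
        | succ k =>
          induction j using Fin.cases with
          | zero =>
            refine disj_comm' ?_
            simpa only [Fin.cases_zero, Fin.cases_succ, List.get_cons_zero,
              List.get_cons_succ'] using key k
          | succ l =>
            have hkl : k ≠ l := fun hh => hij (by rw [hh])
            simpa only [Fin.cases_succ, List.get_cons_succ'] using hd' k l hkl
    · -- start a new shelf at height y + h
      push_neg at hx
      have hnew : y + h + s ≤ 1 := by
        nlinarith [hinv']
      have hinvL' : ∀ t ∈ L', (1 - a) * (y + h + s - a) + (s - s) * t +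
          ((L'.map (fun r => r^2)).sum) ≤ (1 - a)^2 := by
        intro t ht
        nlinarith [hinv']
      obtain ⟨pos', hb', hc', hd'⟩ := ih (y + h) s s hsortL'
        (fun t ht => hpos t (List.mem_cons_of_mem s ht))
        (fun t ht => hmax t ht)
        (by linarith) hs0 (by linarith) hnew le_rfl hinvL'
      have key : ∀ k : Fin L'.length,
          (Set.Ioo (0:ℝ) (0 + s) ×ˢ Set.Ioo (y + h) (y + h + s)) ∩
          (Set.Ioo (pos' k).1 ((pos' k).1 + L'.get k) ×ˢ
            Set.Ioo (pos' k).2 ((pos' k).2 + L'.get k)) = ∅ := by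
        intro k
        rcases hc' k with ⟨h1, h2⟩ | h1
        · exact disj_fst (by linarith)
        · exact disj_snd (by linarith)
      refine ⟨Fin.cases (0, y + h) pos', ?_, ?_, ?_⟩
      · intro i
        induction i using Fin.cases with
        | zero =>
          simp only [Fin.cases_zero, List.get_cons_zero]
          exact ⟨le_rfl, by linarith, by linarith, hnew⟩
        | succ j =>
          simp only [Fin.cases_succ, List.get_cons_succ']
          exact hb' j
      · intro i
        induction i using Fin.cases with
        | zero => exact Or.inr (by simp)
        | succ j =>
          rcases hc' j with ⟨h1, h2⟩ | h1
          · refine Or.inr ?_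
            simp only [Fin.cases_succ]
            rw [h1]
          · exact Or.inr (by simp only [Fin.cases_succ]; linarith)
      · intro i j hij
        induction i using Fin.cases with
        | zero =>
          induction j using Fin.cases with
          | zero => exact absurd rfl hij
          | succ k =>
            simpa only [Fin.cases_zero, Fin.cases_succ, List.get_cons_zero,
              List.get_cons_succ', zero_add] using key k
        | succ k =>
          induction j using Fin.cases with
          | zero =>
            refine disj_comm' ?_
            simpa only [Fin.cases_zero, Fin.cases_succ, List.get_cons_zero,
              List.get_cons_succ', zero_add] using key k
          | succ l =>
            have hkl : k ≠ l := fun hh => hij (by rw [hh])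
            simpa only [Fin.cases_succ, List.get_cons_succ'] using hd' k l hkl

lemma pack_list (L : List ℝ) (hsort : L.Pairwise (· ≥ ·)) (hpos : ∀ t ∈ L, 0 < t)
    (hhalf : ∀ t ∈ L, t ≤ 1/2)
    (harea : ∀ t ∈ L, ((L.map (fun r => r^2)).sum) ≤ t^2 + (1 - t)^2) :
    ∃ pos : Fin L.length → ℝ × ℝ,
      (∀ i, 0 ≤ (pos i).1 ∧ (pos i).1 + L.get i ≤ 1 ∧ 0 ≤ (pos i).2 ∧ (pos i).2 + L.get i ≤ 1) ∧
      (∀ i j, i ≠ j →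
        (Set.Ioo (pos i).1 ((pos i).1 + L.get i) ×ˢ Set.Ioo (pos i).2 ((pos i).2 + L.get i)) ∩
        (Set.Ioo (pos j).1 ((pos j).1 + L.get j) ×ˢ Set.Ioo (pos j).2 ((pos j).2 + L.get j)) = ∅) := by
  cases L with
  | nil => exact ⟨Fin.elim0, fun i => i.elim0, fun i => i.elim0⟩
  | cons s L' =>
    have hsortL' : L'.Pairwise (· ≥ ·) := (List.pairwise_cons.mp hsort).2
    have hmax : ∀ t ∈ L', t ≤ s := fun t ht => (List.pairwise_cons.mp hsort).1 t ht
    have hs0 : 0 < s := hpos s (List.mem_cons_self)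
    have hs2 : s ≤ 1/2 := hhalf s (List.mem_cons_self)
    have harea' : (L'.map (fun r => r^2)).sum ≤ (1 - s)^2 := by
      have := harea s (List.mem_cons_self)
      simp only [List.map_cons, List.sum_cons] at this
      linarith
    obtain ⟨pos', hb', hc', hd'⟩ := pack_aux s hs0 hs2 L' 0 s s hsortL'
      (fun t ht => hpos t (List.mem_cons_of_mem s ht))
      (fun t ht => hmax t ht)
      le_rfl hs0 le_rfl (by linarith) le_rfl
      (by intro t ht
          have ht0 : 0 < t := hpos t (List.mem_cons_of_mem s ht)
          nlinarith [harea'])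
    have key : ∀ k : Fin L'.length,
          (Set.Ioo (0:ℝ) s ×ˢ Set.Ioo (0:ℝ) s) ∩
          (Set.Ioo (pos' k).1 ((pos' k).1 + L'.get k) ×ˢ
            Set.Ioo (pos' k).2 ((pos' k).2 + L'.get k)) = ∅ := by
        intro k
        rcases hc' k with ⟨h1, h2⟩ | h1
        · exact disj_fst (by linarith)
        · exact disj_snd (by linarith)
    refine ⟨Fin.cases (0, 0) pos', ?_, ?_⟩
    · intro i
      induction i using Fin.cases with
      | zero =>
        simp only [Fin.cases_zero, List.get_cons_zero]
        exact ⟨le_rfl, by linarith, le_rfl, by linarith⟩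
      | succ j =>
        simp only [Fin.cases_succ, List.get_cons_succ']
        exact hb' j
    · intro i j hij
      induction i using Fin.cases with
      | zero =>
        induction j using Fin.cases with
        | zero => exact absurd rfl hij
        | succ k =>
          have := key k
          simpa only [Fin.cases_zero, Fin.cases_succ, List.get_cons_zero,
            List.get_cons_succ', zero_add] using this
      | succ k =>
        induction j using Fin.cases with
        | zero =>
          refine disj_comm' ?_
          have := key k
          simpa only [Fin.cases_zero, Fin.cases_succ, List.get_cons_zero,
            List.get_cons_succ', zero_add] using this
        | succ l =>
          have hkl : k ≠ l := fun hh => hij (by rw [hh])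
          simpa only [Fin.cases_succ, List.get_cons_succ'] using hd' k l hkl

theorem stmt_15 (m : ℕ) (hm : 2 ≤ m) (n : ℕ) (s : Fin n → ℝ)
    (hs : ∀ i, 0 < s i) (hsm : ∀ i, s i ≤ 1 / m)
    (harea : ∑ i, (s i) ^ 2 ≤ 1 / (m : ℝ) ^ 2 + (1 - 1 / m) ^ 2) :
    ∃ pos : Fin n → ℝ × ℝ,
      (∀ i, 0 ≤ (pos i).1 ∧ (pos i).1 + s i ≤ 1 ∧ 0 ≤ (pos i).2 ∧ (pos i).2 + s i ≤ 1) ∧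
      ∀ i j, i ≠ j →
        (Set.Ioo (pos i).1 ((pos i).1 + s i) ×ˢ Set.Ioo (pos i).2 ((pos i).2 + s i)) ∩
        (Set.Ioo (pos j).1 ((pos j).1 + s j) ×ˢ Set.Ioo (pos j).2 ((pos j).2 + s j)) = ∅ := by
  have hm2 : (2:ℝ) ≤ m := by exact_mod_cast hm
  have hm0 : (0:ℝ) < m := by linarith
  have hmhalf : (1:ℝ) / m ≤ 1 / 2 := by
    apply one_div_le_one_div_of_le <;> linarith
  have hmsq : ((1:ℝ) / m)^2 = 1 / (m:ℝ)^2 := by rw [div_pow, one_pow]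
  set σ := Tuple.sort (fun i => -s i) with hσ
  have hmono : Monotone ((fun i => -s i) ∘ σ) := Tuple.monotone_sort (fun i => -s i)
  set g : Fin n → ℝ := fun i => s (σ i) with hg
  have hanti : ∀ i j : Fin n, i ≤ j → g j ≤ g i := by
    intro i j hij
    have := hmono hij
    simp only [Function.comp_apply] at this
    simp only [hg]
    linarith
  set L : List ℝ := List.ofFn g with hL
  have hlen : L.length = n := List.length_ofFn
  have hsort : L.Pairwise (· ≥ ·) := by
    rw [hL, List.pairwise_ofFn]
    intro i j hij
    exact hanti i j (le_of_lt hij)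
  have hposL : ∀ t ∈ L, 0 < t := by
    intro t ht
    rw [hL, List.mem_ofFn] at ht
    obtain ⟨i, rfl⟩ := ht
    exact hs _
  have hhalfL : ∀ t ∈ L, t ≤ 1/2 := by
    intro t ht
    rw [hL, List.mem_ofFn] at ht
    obtain ⟨i, rfl⟩ := ht
    exact le_trans (hsm _) hmhalf
  have hsum : (L.map (fun r => r^2)).sum = ∑ i, (s i) ^ 2 := by
    rw [hL, List.map_ofFn, List.sum_ofFn]
    exact Equiv.sum_comp σ (fun i => s i ^ 2)
  have hareaL : ∀ t ∈ L, (L.map (fun r => r^2)).sum ≤ t^2 + (1 - t)^2 := by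
    intro t ht
    have ht0 : 0 < t := hposL t ht
    have ht1 : t ≤ 1 / m := by
      rw [hL, List.mem_ofFn] at ht
      obtain ⟨i, rfl⟩ := ht
      exact hsm _
    rw [hsum]
    have hkey : 1 / (m:ℝ)^2 + (1 - 1/m)^2 ≤ t^2 + (1 - t)^2 := by
      nlinarith [mul_nonneg (by linarith : (0:ℝ) ≤ 1/(m:ℝ) - t)
        (by linarith : (0:ℝ) ≤ 1 - 1/(m:ℝ) - t)]
    linarith
  obtain ⟨pos', hb', hd'⟩ := pack_list L hsort hposL hhalfL hareaL
  have hget : ∀ i : Fin n, L.get (Fin.cast hlen.symm (σ.symm i)) = s i := by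
    intro i
    refine (List.get_ofFn g _).trans ?_
    have h2 : ∀ (j : Fin n) (p : n = L.length) (q : L.length = n),
        Fin.cast q (Fin.cast p j) = j := by
      intro j p q
      ext
      simp
    rw [h2]
    simp [hg]
  refine ⟨fun i => pos' (Fin.cast hlen.symm (σ.symm i)), ?_, ?_⟩
  · intro i
    have := hb' (Fin.cast hlen.symm (σ.symm i))
    rwa [hget i] at this
  · intro i j hij
    have hne : Fin.cast hlen.symm (σ.symm i) ≠ Fin.cast hlen.symm (σ.symm j) := by
      intro hh
      apply hij
      have hv := congrArg Fin.val hh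
      simp only [Fin.coe_cast] at hv
      have h3 : σ.symm i = σ.symm j := Fin.ext hv
      have := congrArg σ h3
      simpa using this
    have := hd' _ _ hne
    rwa [hget i, hget j] at this
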